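/- Under the hypotheses of the flexible FOM residual formula, suppose further that H_m(σ; T_m) admits a generalized eigendecomposition H_m(σ; T_m) = H_m F Θ F^{-1} with F invertible and Θ = diag(θ_1,...,θ_m), with all θ_k ≠ 0 and τ_m + θ_k − σ ≠ 0. Then the flexible FOM residual satisfies ‖r_m(σ)‖₂ ≤ Σ_{k=1}^m ρ_k · |(σ − τ_m)/(θ_k + τ_m − σ)| · |θ_k|^{-1} · |s_k|, where s_k = e_k^* F^{-1} H_m^{-1} β e_1 and ρ_k = |h_{m+1,m}| · |τ_m + θ_k − σ| · |e_m^* f_k| with f_k the k-th column of F. -/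

import Mathlib

open Matrix

noncomputable def norm2 {n : ℕ} (x : Fin n → ℂ) : ℝ :=
  ‖(WithLp.equiv 2 (Fin n → ℂ)).symm x‖

theorem stmt9 {n m : ℕ} (K M : Matrix (Fin n) (Fin n) ℂ)
    (Z : Matrix (Fin n) (Fin (m + 1)) ℂ) (V : Matrix (Fin n) (Fin (m + 2)) ℂ)
    (hV : Vᴴ * V = 1)
    (H : Matrix (Fin (m + 2)) (Fin (m + 1)) ℂ) (τs : Fin (m + 1) → ℂ)
    (σ : ℂ) (β : ℝ) (hβ : 0 < β)
    (h1 : M * Z = V * H)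
    (h2 : K * Z + M * Z * Matrix.diagonal τs = V.submatrix id Fin.castSucc)
    (hH : ∀ j : Fin (m + 1), j ≠ Fin.last m → H (Fin.last (m + 1)) j = 0)
    (Hσ : Matrix (Fin (m + 1)) (Fin (m + 1)) ℂ)
    (hHσ : Hσ = 1 + H.submatrix Fin.castSucc id * (σ • 1 - Matrix.diagonal τs))
    (hinv : IsUnit Hσ)
    (hHm : IsUnit (H.submatrix Fin.castSucc id))
    (F : Matrix (Fin (m + 1)) (Fin (m + 1)) ℂ) (hF : IsUnit F)
    (θ : Fin (m + 1) → ℂ) (hθ : ∀ k, θ k ≠ 0)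
    (hτθ : ∀ k, τs (Fin.last m) + θ k - σ ≠ 0)
    (hdecomp : Hσ = H.submatrix Fin.castSucc id * F * Matrix.diagonal θ * F⁻¹)
    (y : Fin (m + 1) → ℂ)
    (hy : y = Hσ⁻¹ *ᵥ ((β : ℂ) • (Pi.single 0 1 : Fin (m + 1) → ℂ))) :
    norm2 ((β : ℂ) • (fun i => V i 0) - (K + σ • M) *ᵥ (Z *ᵥ y)) ≤
      ∑ k : Fin (m + 1),
        (‖H (Fin.last (m + 1)) (Fin.last m)‖ *
            ‖τs (Fin.last m) + θ k - σ‖ *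
            ‖F (Fin.last m) k‖) *
          ‖(σ - τs (Fin.last m)) / (θ k + τs (Fin.last m) - σ)‖ *
          (‖θ k‖)⁻¹ *
          ‖
            ((F⁻¹ *ᵥ ((H.submatrix Fin.castSucc id)⁻¹ *ᵥ
              ((β : ℂ) • (Pi.single 0 1 : Fin (m + 1) → ℂ)))) k)‖ := by
  classical
  set Hm : Matrix (Fin (m+1)) (Fin (m+1)) ℂ := H.submatrix Fin.castSucc id with hHmdef
  set e1 : Fin (m+1) → ℂ := (β : ℂ) • (Pi.single 0 1 : Fin (m + 1) → ℂ) with he1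
  set s : Fin (m+1) → ℂ := F⁻¹ *ᵥ (Hm⁻¹ *ᵥ e1) with hs
  -- diagonal rewrite
  have hdiag : σ • (1 : Matrix (Fin (m+1)) (Fin (m+1)) ℂ) - Matrix.diagonal τs
      = Matrix.diagonal (fun j => σ - τs j) := by
    ext i j
    by_cases hij : i = j <;> simp [Matrix.one_apply, hij]
  -- Hσ *ᵥ y = e1
  have hHσy : Hσ *ᵥ y = e1 := by
    rw [hy, Matrix.mulVec_mulVec, Matrix.mul_nonsing_inv _
      ((Matrix.isUnit_iff_isUnit_det Hσ).mp hinv), Matrix.one_mulVec]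
  -- matrix identity
  have hKZ : (K + σ • M) * Z
      = V.submatrix id Fin.castSucc + V * (H * Matrix.diagonal (fun j => σ - τs j)) := by
    have hK : K * Z = V.submatrix id Fin.castSucc - M * Z * Matrix.diagonal τs :=
      eq_sub_of_add_eq h2
    rw [Matrix.add_mul, hK, Matrix.smul_mul, h1, ← hdiag, ← Matrix.mul_assoc,
      Matrix.mul_sub, Matrix.mul_smul, Matrix.mul_one]
    abel
  -- the vector u
  have hu : (H * Matrix.diagonal (fun j => σ - τs j)) *ᵥ y
      = Fin.snoc (fun i : Fin (m+1) => (Hσ *ᵥ y) i - y i)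
          (H (Fin.last (m+1)) (Fin.last m) * (σ - τs (Fin.last m)) * y (Fin.last m)) := by
    funext j
    refine Fin.lastCases ?_ ?_ j
    · simp only [Fin.snoc_last, Matrix.mulVec, dotProduct, Matrix.mul_diagonal]
      rw [Finset.sum_eq_single (Fin.last m)
        (fun b _ hb => by rw [hH b hb]; ring)
        (fun hnot => absurd (Finset.mem_univ _) hnot)]
    · intro i
      have hrow : (Hσ *ᵥ y) i = y i + ((Hm * Matrix.diagonal (fun j => σ - τs j)) *ᵥ y) i := by
        rw [hHσ, hdiag, Matrix.add_mulVec, Matrix.one_mulVec]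
        simp [hHmdef]
      rw [Fin.snoc_castSucc, hrow]
      simp only [add_sub_cancel_left, Matrix.mulVec, dotProduct, Matrix.mul_diagonal,
        hHmdef, Matrix.submatrix_apply, id_eq]
  set c : ℂ := H (Fin.last (m+1)) (Fin.last m) * (σ - τs (Fin.last m)) * y (Fin.last m) with hc
  -- the residual
  have hres : ((β : ℂ) • (fun i => V i 0) - (K + σ • M) *ᵥ (Z *ᵥ y))
      = fun i => (-c) * V i (Fin.last (m+1)) := by
    funext i
    rw [Matrix.mulVec_mulVec, hKZ, Matrix.add_mulVec, ← Matrix.mulVec_mulVec, hu, hHσy]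
    simp only [Pi.sub_apply, Pi.smul_apply, Pi.add_apply, smul_eq_mul, Matrix.mulVec,
      dotProduct, Fin.sum_univ_castSucc (n := m + 1), Fin.snoc_castSucc, Fin.snoc_last,
      Matrix.submatrix_apply, id_eq]
    rw [← add_assoc, ← Finset.sum_add_distrib]
    have hcomb : ∀ j : Fin (m+1), V i (Fin.castSucc j) * y j
        + V i (Fin.castSucc j) * (e1 j - y j) = V i (Fin.castSucc j) * e1 j := by
      intro j; ring
    rw [Finset.sum_congr rfl fun j _ => hcomb j]
    have he1sum : ∑ j : Fin (m+1), V i (Fin.castSucc j) * e1 j = (β : ℂ) * V i 0 := by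
      rw [he1, Finset.sum_eq_single (0 : Fin (m+1))
        (fun b _ hb => by simp [Pi.single_apply, hb])
        (fun hnot => absurd (Finset.mem_univ _) hnot)]
      simp [mul_comm]
    rw [he1sum]
    ring
  -- norm of residual
  have hnormV : ∑ i : Fin n, ‖V i (Fin.last (m+1))‖ ^ 2 = 1 := by
    have hVV := congrFun (congrFun hV (Fin.last (m+1))) (Fin.last (m+1))
    rw [Matrix.mul_apply] at hVV
    simp only [Matrix.conjTranspose_apply, Matrix.one_apply_eq] at hVV
    have h2' : ((∑ i : Fin n, ‖V i (Fin.last (m+1))‖ ^ 2 : ℝ) : ℂ) = 1 := by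
      push_cast
      rw [← hVV]
      refine Finset.sum_congr rfl fun i _ => ?_
      rw [RCLike.star_def, mul_comm, Complex.mul_conj, Complex.normSq_eq_norm_sq]
      push_cast
      ring
    exact_mod_cast h2'
  have hnorm : norm2 ((β : ℂ) • (fun i => V i 0) - (K + σ • M) *ᵥ (Z *ᵥ y))
      = ‖c‖ := by
    rw [hres]
    unfold norm2
    rw [EuclideanSpace.norm_eq]
    have hterm : ∀ i : Fin n,
        ‖(WithLp.equiv 2 (Fin n → ℂ)).symm (fun i => (-c) * V i (Fin.last (m+1))) i‖ ^ 2
        = ‖c‖ ^ 2 * ‖V i (Fin.last (m+1))‖ ^ 2 := by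
      intro i
      simp [norm_mul, mul_pow]
    rw [Finset.sum_congr rfl fun i _ => hterm i, ← Finset.mul_sum, hnormV, mul_one,
      Real.sqrt_sq (norm_nonneg c)]
  rw [hnorm]
  -- y in terms of s
  have hFdet : IsUnit F.det := (Matrix.isUnit_iff_isUnit_det F).mp hF
  have hylast : y (Fin.last m) = ∑ k : Fin (m+1), F (Fin.last m) k * (θ k)⁻¹ * s k := by
    have hinvHσ : Hσ⁻¹ = F * ((Matrix.diagonal θ)⁻¹ * (F⁻¹ * Hm⁻¹)) := by
      rw [hdecomp, Matrix.mul_inv_rev, Matrix.mul_inv_rev, Matrix.mul_inv_rev,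
        Matrix.nonsing_inv_nonsing_inv F hFdet]
    have hdiaginv : (Matrix.diagonal θ)⁻¹ = Matrix.diagonal (fun k => (θ k)⁻¹) := by
      apply Matrix.inv_eq_right_inv
      rw [Matrix.diagonal_mul_diagonal]
      have : (fun i => θ i * (θ i)⁻¹) = fun _ => (1 : ℂ) :=
        funext fun i => mul_inv_cancel₀ (hθ i)
      rw [this, Matrix.diagonal_one]
    have hdv : (Matrix.diagonal θ)⁻¹ *ᵥ s = fun k => (θ k)⁻¹ * s k := by
      funext k
      rw [hdiaginv, Matrix.mulVec_diagonal]
    rw [hy, hinvHσ, ← Matrix.mulVec_mulVec (M := F),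
      ← Matrix.mulVec_mulVec (M := (Matrix.diagonal θ)⁻¹),
      ← Matrix.mulVec_mulVec (M := F⁻¹), ← hs, hdv]
    simp only [Matrix.mulVec, dotProduct]
    refine Finset.sum_congr rfl fun k _ => ?_
    ring
  -- triangle inequality step
  have hcle : ‖c‖ ≤ ∑ k : Fin (m+1),
      ‖H (Fin.last (m+1)) (Fin.last m)‖ * ‖σ - τs (Fin.last m)‖
        * ‖F (Fin.last m) k‖ * (‖θ k‖)⁻¹ * ‖s k‖ := by
    rw [hc, hylast, norm_mul, norm_mul]
    calc ‖H (Fin.last (m+1)) (Fin.last m)‖ * ‖σ - τs (Fin.last m)‖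
          * ‖∑ k : Fin (m+1), F (Fin.last m) k * (θ k)⁻¹ * s k‖
        ≤ ‖H (Fin.last (m+1)) (Fin.last m)‖ * ‖σ - τs (Fin.last m)‖
          * ∑ k : Fin (m+1), ‖F (Fin.last m) k * (θ k)⁻¹ * s k‖ := by
          exact mul_le_mul_of_nonneg_left (norm_sum_le _ _) (by positivity)
      _ = _ := by
          rw [Finset.mul_sum]
          refine Finset.sum_congr rfl fun k _ => ?_
          rw [norm_mul, norm_mul, norm_inv]
          ring
  refine hcle.trans (le_of_eq (Finset.sum_congr rfl fun k _ => ?_))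
  have hne : ‖θ k + τs (Fin.last m) - σ‖ ≠ 0 := by
    rw [norm_ne_zero_iff]
    intro hzero
    exact hτθ k (by rw [← hzero]; ring)
  have he3 : ‖τs (Fin.last m) + θ k - σ‖
      = ‖θ k + τs (Fin.last m) - σ‖ := by
    congr 1
    ring
  rw [norm_div, he3]
  have hrearr : (‖H (Fin.last (m+1)) (Fin.last m)‖
        * ‖θ k + τs (Fin.last m) - σ‖ * ‖F (Fin.last m) k‖)
      * (‖σ - τs (Fin.last m)‖ / ‖θ k + τs (Fin.last m) - σ‖)
      * (‖θ k‖)⁻¹ * ‖s k‖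
      = ‖H (Fin.last (m+1)) (Fin.last m)‖ * ‖σ - τs (Fin.last m)‖
        * ‖F (Fin.last m) k‖ * (‖θ k‖)⁻¹ * ‖s k‖
        * (‖θ k + τs (Fin.last m) - σ‖ / ‖θ k + τs (Fin.last m) - σ‖) := by
    ring
  rw [hrearr, div_self hne, mul_one]
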